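/- Let f : ℝ^d → ℝ be differentiable, α-strongly convex and β-smooth with minimizer x*. Let l be uniform on the unit sphere, and let x⁺ = argmin over h ∈ ℝ of f(x + h l) (exact line search along l from x). Then E[f(x⁺)] − f(x*) ≤ (1 − α/(βd))(f(x) − f(x*)). -/

import Mathlib

open MeasureTheory RealInnerProductSpace

/-- Exact line search along a uniformly random direction on the unit sphere:
for an `α`-strongly convex and `β`-smooth function with minimizer `x*`, the exact
line-search point `x⁺` from `x` along a uniform random direction `l` satisfies
`E[f(x⁺)] − f(x*) ≤ (1 − α/(βd)) (f(x) − f(x*))`. -/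
theorem exact_line_search_expected_decrease (d : ℕ)
    (f : EuclideanSpace ℝ (Fin d) → ℝ) (α β : ℝ) (hα : 0 < α) (hβ : 0 < β)
    (hdiff : Differentiable ℝ f)
    (hsc : ∀ x h : EuclideanSpace ℝ (Fin d),
      f x + ⟪gradient f x, h⟫ + α / 2 * ‖h‖ ^ 2 ≤ f (x + h))
    (hsmooth : ∀ x h : EuclideanSpace ℝ (Fin d),
      f (x + h) ≤ f x + ⟪gradient f x, h⟫ + β / 2 * ‖h‖ ^ 2)
    (xstar : EuclideanSpace ℝ (Fin d)) (hmin : ∀ y, f xstar ≤ f y)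
    -- `μ` is the uniform distribution of the direction `l` on the unit sphere
    (μ : Measure (EuclideanSpace ℝ (Fin d))) [IsProbabilityMeasure μ]
    (hsphere : μ {l | ‖l‖ = 1} = 1)
    (hinv : ∀ R : EuclideanSpace ℝ (Fin d) ≃ₗᵢ[ℝ] EuclideanSpace ℝ (Fin d),
      μ.map R = μ)
    (x : EuclideanSpace ℝ (Fin d))
    -- `xplus l` is the exact line-search minimizer of `f` on the line through `x`
    -- with direction `l`
    (xplus : EuclideanSpace ℝ (Fin d) → EuclideanSpace ℝ (Fin d))
    (hline : ∀ l, ‖l‖ = 1 → ∃ h : ℝ, xplus l = x + h • l)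
    (hopt : ∀ l, ‖l‖ = 1 → ∀ h : ℝ, f (xplus l) ≤ f (x + h • l))
    (hint : Integrable (fun l => f (xplus l)) μ) :
    (∫ l, f (xplus l) ∂μ) - f xstar ≤ (1 - α / (β * d)) * (f x - f xstar) := by
  classical
  set g : EuclideanSpace ℝ (Fin d) := gradient f x with hg
  -- d is positive
  have hd : 0 < d := by
    rcases Nat.eq_zero_or_pos d with h0 | h; swap; · exact h
    exfalso
    have hempty : {l : EuclideanSpace ℝ (Fin d) | ‖l‖ = 1} = ∅ := by
      ext l
      simp only [Set.mem_setOf_eq, Set.mem_empty_iff_false, iff_false]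
      have : l = 0 := by
        subst h0
        exact Subsingleton.elim l 0
      simp [this]
    rw [hempty] at hsphere
    simp at hsphere
  have hD : (0 : ℝ) < (d : ℝ) := by exact_mod_cast hd
  -- a.e. on the sphere
  have hmeasS : MeasurableSet {l : EuclideanSpace ℝ (Fin d) | ‖l‖ = 1} :=
    (isClosed_eq continuous_norm continuous_const).measurableSet
  have hae : ∀ᵐ l ∂μ, ‖l‖ = 1 := by
    rw [ae_iff]
    have : {l : EuclideanSpace ℝ (Fin d) | ¬ ‖l‖ = 1} =
        {l : EuclideanSpace ℝ (Fin d) | ‖l‖ = 1}ᶜ := rfl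
    rw [this, (prob_compl_eq_zero_iff hmeasS)]
    exact hsphere
  -- integrability of squared inner products
  have hint2 : ∀ v : EuclideanSpace ℝ (Fin d), Integrable (fun l => ⟪v, l⟫ ^ 2) μ := by
    intro v
    have hc : Continuous fun l : EuclideanSpace ℝ (Fin d) => ⟪v, l⟫ ^ 2 :=
      (continuous_const.inner continuous_id).pow 2
    refine (integrable_const (‖v‖ ^ 2)).mono' hc.aestronglyMeasurable ?_
    filter_upwards [hae] with l hl
    have h1 : |⟪v, l⟫| ≤ ‖v‖ := by simpa [hl] using abs_real_inner_le_norm v l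
    have h2 : ‖⟪v, l⟫ ^ 2‖ = |⟪v, l⟫| ^ 2 := by
      rw [Real.norm_eq_abs, abs_pow]
    rw [h2]
    exact pow_le_pow_left₀ (abs_nonneg _) h1 2
  -- rotation invariance of ∫ ⟪u,l⟫²
  have hrot : ∀ u v : EuclideanSpace ℝ (Fin d), ‖u‖ = ‖v‖ →
      (∫ l, ⟪u, l⟫ ^ 2 ∂μ) = ∫ l, ⟪v, l⟫ ^ 2 ∂μ := by
    intro u v huv
    set R : EuclideanSpace ℝ (Fin d) ≃ₗᵢ[ℝ] EuclideanSpace ℝ (Fin d) :=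
      Submodule.reflection (ℝ ∙ (v - u))ᗮ with hR
    have hRv : R v = u := Submodule.reflection_sub huv.symm
    have hmap := hinv R
    have hcont : Continuous fun l : EuclideanSpace ℝ (Fin d) => ⟪u, l⟫ ^ 2 :=
      (continuous_const.inner continuous_id).pow 2
    calc (∫ l, ⟪u, l⟫ ^ 2 ∂μ) = ∫ l, ⟪u, l⟫ ^ 2 ∂(μ.map R) := by rw [hmap]
      _ = ∫ l, ⟪u, R l⟫ ^ 2 ∂μ := by
          rw [integral_map (R.continuous.measurable.aemeasurable)
            hcont.aestronglyMeasurable]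
      _ = ∫ l, ⟪v, l⟫ ^ 2 ∂μ := by
          congr 1; funext l
          rw [← hRv, R.inner_map_map]
  -- key: for unit u, ∫ ⟪u,l⟫² = 1/d
  have hkey : ∀ u : EuclideanSpace ℝ (Fin d), ‖u‖ = 1 →
      (∫ l, ⟪u, l⟫ ^ 2 ∂μ) = 1 / d := by
    intro u hu
    set b : OrthonormalBasis (Fin d) ℝ (EuclideanSpace ℝ (Fin d)) :=
      EuclideanSpace.basisFun (Fin d) ℝ with hb
    have hbn : ∀ i, ‖b i‖ = 1 := fun i => b.orthonormal.1 i
    have hbi : ∀ i, (∫ l, ⟪b i, l⟫ ^ 2 ∂μ) = ∫ l, ⟪u, l⟫ ^ 2 ∂μ := fun i =>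
      hrot _ _ (by rw [hbn i, hu])
    have hsum1 : (∫ l, (∑ i, ⟪b i, l⟫ ^ 2) ∂μ) = d * ∫ l, ⟪u, l⟫ ^ 2 ∂μ := by
      rw [integral_finset_sum _ (fun i _ => hint2 _),
        Finset.sum_congr rfl fun i _ => hbi i, Finset.sum_const,
        Finset.card_univ, Fintype.card_fin, nsmul_eq_mul]
    have hsum2 : (∫ l, (∑ i, ⟪b i, l⟫ ^ 2) ∂μ) = 1 := by
      rw [integral_congr_ae (g := fun _ => (1 : ℝ))]
      · simp
      · filter_upwards [hae] with l hl
        have h1 := b.sum_inner_mul_inner l l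
        have h2 : ∑ i, ⟪b i, l⟫ ^ 2 = ∑ i, ⟪l, b i⟫ * ⟪b i, l⟫ := by
          refine Finset.sum_congr rfl fun i _ => ?_
          rw [pow_two, real_inner_comm]
        rw [h2, h1, real_inner_self_eq_norm_sq, hl, one_pow]
    rw [hsum2] at hsum1
    rw [eq_div_iff hD.ne']
    linear_combination (-1 : ℝ) * hsum1
  -- expectation of ⟪g,l⟫²
  have hEg : (∫ l, ⟪g, l⟫ ^ 2 ∂μ) = ‖g‖ ^ 2 / d := by
    rcases eq_or_ne g 0 with hg0 | hg0
    · simp [hg0]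
    · have hgn : (0 : ℝ) < ‖g‖ := norm_pos_iff.mpr hg0
      have hu : ‖(‖g‖⁻¹ • g : EuclideanSpace ℝ (Fin d))‖ = 1 := by
        rw [norm_smul, Real.norm_eq_abs, abs_of_pos (inv_pos.mpr hgn),
          inv_mul_cancel₀ hgn.ne']
      have hkeyu := hkey _ hu
      have heq : ∀ l : EuclideanSpace ℝ (Fin d),
          ⟪g, l⟫ ^ 2 = ‖g‖ ^ 2 * ⟪(‖g‖⁻¹ • g : EuclideanSpace ℝ (Fin d)), l⟫ ^ 2 := by
        intro l
        rw [real_inner_smul_left]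
        field_simp
      calc (∫ l, ⟪g, l⟫ ^ 2 ∂μ)
          = ∫ l, ‖g‖ ^ 2 * ⟪(‖g‖⁻¹ • g : EuclideanSpace ℝ (Fin d)), l⟫ ^ 2 ∂μ := by
            congr 1; funext l; exact heq l
        _ = ‖g‖ ^ 2 * ∫ l, ⟪(‖g‖⁻¹ • g : EuclideanSpace ℝ (Fin d)), l⟫ ^ 2 ∂μ :=
            integral_const_mul _ _
        _ = ‖g‖ ^ 2 / d := by rw [hkeyu]; ring
  -- pointwise decrease from exact line search and smoothness
  have hdec : ∀ l : EuclideanSpace ℝ (Fin d), ‖l‖ = 1 →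
      f (xplus l) ≤ f x - ⟪g, l⟫ ^ 2 / (2 * β) := by
    intro l hl
    set t : ℝ := ⟪g, l⟫ with ht
    have h1 := hopt l hl (-(t / β))
    have h2 := hsmooth x ((-(t / β)) • l)
    rw [real_inner_smul_right] at h2
    have hn : ‖(-(t / β)) • l‖ ^ 2 = (t / β) ^ 2 := by
      rw [norm_smul, hl, mul_one, Real.norm_eq_abs, sq_abs]
      ring
    rw [hn, ← hg, ← ht] at h2
    have hc : -(t / β) * t + β / 2 * (t / β) ^ 2 = -(t ^ 2 / (2 * β)) := by
      field_simp
      ring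
    have := le_trans h1 h2
    linarith [this, hc]
  -- PL inequality
  have hPL : 2 * α * (f x - f xstar) ≤ ‖g‖ ^ 2 := by
    have h1 := hsc x (xstar - x)
    have h2 : x + (xstar - x) = xstar := by abel
    rw [h2, ← hg] at h1
    set h : EuclideanSpace ℝ (Fin d) := xstar - x with hh
    have e1 : ‖α • h + g‖ ^ 2 = α ^ 2 * ‖h‖ ^ 2 + 2 * (α * ⟪g, h⟫) + ‖g‖ ^ 2 := by
      rw [norm_add_sq_real, real_inner_smul_left, real_inner_comm, norm_smul,
        Real.norm_eq_abs, abs_of_pos hα, mul_pow]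
    nlinarith [sq_nonneg ‖α • h + g‖, h1, e1, hα]
  -- combine
  have hfinal : ∀ᵐ l ∂μ, f (xplus l) ≤ f x - ⟪g, l⟫ ^ 2 / (2 * β) := by
    filter_upwards [hae] with l hl
    exact hdec l hl
  have hint3 : Integrable (fun l : EuclideanSpace ℝ (Fin d) =>
      f x - ⟪g, l⟫ ^ 2 / (2 * β)) μ :=
    (integrable_const (f x)).sub ((hint2 g).div_const _)
  have hI : (∫ l, f (xplus l) ∂μ) ≤ ∫ l, (f x - ⟪g, l⟫ ^ 2 / (2 * β)) ∂μ :=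
    integral_mono_ae hint hint3 hfinal
  have hval : (∫ l, (f x - ⟪g, l⟫ ^ 2 / (2 * β)) ∂μ)
      = f x - (‖g‖ ^ 2 / d) / (2 * β) := by
    rw [integral_sub (integrable_const _) ((hint2 g).div_const _), integral_div, hEg]
    simp
  have hexp : (1 - α / (β * d)) * (f x - f xstar) -
      ((f x - (‖g‖ ^ 2 / d) / (2 * β)) - f xstar) =
      (‖g‖ ^ 2 / 2 - α * (f x - f xstar)) / (β * d) := by
    field_simp
    ring
  have hnn : 0 ≤ (‖g‖ ^ 2 / 2 - α * (f x - f xstar)) / (β * d) :=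
    div_nonneg (by linarith [hPL]) (by positivity)
  linarith [hI, hval.le, hval.ge, hexp, hnn]
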